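/- arXiv:1302.4269 — 4 statements merged into one kernel-verified Lean document; each statement's English description precedes it below -/
import Mathlib

section
/- Let V be a real vector space, let a_par and a_perp be bilinear forms on V, set a := a_par + a_perp, let f : V → ℝ be linear, and let ε be a real number. For φ, q ∈ V set p := φ − ε·q. Then the following two systems are equivalent: (i) the micro–macro system: a_par(p, w) = 0 for all w ∈ V, and a_perp(p, v) + ε·a_perp(q, v) + a_par(q, v) = f(v) for all v ∈ V; (ii) the Asymptotic Preserving system (AP): a(φ, v) + (1−ε)·a_par(q, v) = f(v) for all v ∈ V, and a_par(φ, w) = ε·a_par(q, w) for all w ∈ V. -/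
/-- Equivalence of the micro–macro system and the Asymptotic Preserving system
(AP), with `p := φ − ε q` and `a := a_∥ + a_⊥`. -/
theorem micro_macro_iff_AP
    {V : Type*} [AddCommGroup V] [Module ℝ V]
    (a_par a_perp : LinearMap.BilinForm ℝ V) (f : V →ₗ[ℝ] ℝ)
    (ε : ℝ) (φ q : V) :
    ((∀ w : V, a_par (φ - ε • q) w = 0) ∧
      (∀ v : V, a_perp (φ - ε • q) v + ε * a_perp q v + a_par q v = f v)) ↔
    ((∀ v : V, (a_par φ v + a_perp φ v) + (1 - ε) * a_par q v = f v) ∧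
      (∀ w : V, a_par φ w = ε * a_par q w)) := by
  simp only [map_sub, map_smul, LinearMap.sub_apply, LinearMap.smul_apply,
    smul_eq_mul]
  constructor
  · rintro ⟨h1, h2⟩
    constructor
    · intro v
      have := h1 v
      have := h2 v
      linarith
    · intro w
      have := h1 w
      linarith
  · rintro ⟨h1, h2⟩
    constructor
    · intro w
      have := h2 w
      linarith
    · intro v
      have := h1 v
      have := h2 v
      linarith
end

section
/- Let V be a real vector space, let a_par, a_perp, s be bilinear forms on V with a_par symmetric and positive semidefinite (a_par(v,v) ≥ 0 for all v) and a_perp positive semidefinite (a_perp(v,v) ≥ 0 for all v), set a := a_par + a_perp, and let ε satisfy 0 < ε ≤ 1. Define the combined bilinear form on V × V by B((φ,q),(v,w)) := a(φ,v) + (1−ε)·a_par(q,v) − a_par(φ,w) + ε·a_par(q,w) + s(q,w). Then for all (φ,q) ∈ V × V one has the coercivity estimate B((φ,q),(φ,q)) ≥ (1/2)·a(φ,φ) + (ε/2)·a_par(q,q) + s(q,q). -/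
/-- Coercivity of the combined bilinear form `B` of the stabilized AP system:
`B((φ,q),(φ,q)) ≥ (1/2)a(φ,φ) + (ε/2)a_∥(q,q) + s(q,q)`, where
`B((φ,q),(v,w)) = a(φ,v) + (1−ε)a_∥(q,v) − a_∥(φ,w) + ε a_∥(q,w) + s(q,w)`
and `a = a_∥ + a_⊥`. -/
theorem stabilized_AP_coercivity
    {V : Type*} [AddCommGroup V] [Module ℝ V]
    (a_par a_perp s : LinearMap.BilinForm ℝ V)
    (hsymm : ∀ u v : V, a_par u v = a_par v u)
    (hpar_pos : ∀ v : V, 0 ≤ a_par v v)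
    (hperp_pos : ∀ v : V, 0 ≤ a_perp v v)
    (ε : ℝ) (hε0 : 0 < ε) (hε1 : ε ≤ 1) :
    ∀ φ q : V,
      (1 / 2) * (a_par φ φ + a_perp φ φ) + (ε / 2) * a_par q q + s q q ≤
        ((a_par φ φ + a_perp φ φ) + (1 - ε) * a_par q φ)
          + (- a_par φ q + ε * a_par q q + s q q) := by
  intro φ q
  have hd := hpar_pos (φ - q)
  have hexp : a_par (φ - q) (φ - q)
      = a_par φ φ - a_par φ q - a_par q φ + a_par q q := by
    simp [LinearMap.sub_apply, map_sub]; ring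
  rw [hexp] at hd
  have hsym := hsymm φ q
  have h1 := hpar_pos φ
  have h2 := hpar_pos q
  have h3 := hperp_pos φ
  nlinarith [mul_nonneg hε0.le h2, mul_nonneg (sub_nonneg.mpr hε1) h1]
end

section
/- Let V be a real Hilbert space, let a_par, a_perp, s be continuous bilinear forms on V with a_par symmetric and positive semidefinite, a_perp positive semidefinite, a := a_par + a_perp coercive (there is α > 0 with a(v,v) ≥ α‖v‖² for all v), and s coercive (there is β > 0 with s(q,q) ≥ β‖q‖² for all q). Let 0 < ε ≤ 1 and let f : V → ℝ be a continuous linear functional. Then there exists a unique pair (φ, q) ∈ V × V satisfying the stabilized Asymptotic Preserving system: a(φ, v) + (1−ε)·a_par(q, v) = f(v) for all v ∈ V, and a_par(φ, w) = ε·a_par(q, w) + s(q, w) for all w ∈ V. -/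
/-- Existence and uniqueness (via Lax–Milgram) of the solution of the stabilized
Asymptotic Preserving system (APS) in a real Hilbert space. -/
theorem stabilized_AP_existence_uniqueness
    {V : Type*} [NormedAddCommGroup V] [InnerProductSpace ℝ V] [CompleteSpace V]
    (a_par a_perp s : V →L[ℝ] V →L[ℝ] ℝ)
    (hsymm : ∀ u v : V, a_par u v = a_par v u)
    (hpar_pos : ∀ v : V, 0 ≤ a_par v v)
    (hperp_pos : ∀ v : V, 0 ≤ a_perp v v)
    (α : ℝ) (hα : 0 < α)
    (hcoer : ∀ v : V, α * ‖v‖ ^ 2 ≤ a_par v v + a_perp v v)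
    (β : ℝ) (hβ : 0 < β)
    (hscoer : ∀ q : V, β * ‖q‖ ^ 2 ≤ s q q)
    (ε : ℝ) (hε0 : 0 < ε) (hε1 : ε ≤ 1)
    (f : V →L[ℝ] ℝ) :
    ∃! φq : V × V,
      (∀ v : V, (a_par φq.1 v + a_perp φq.1 v) + (1 - ε) * a_par φq.2 v = f v) ∧
      (∀ w : V, a_par φq.1 w = ε * a_par φq.2 w + s φq.2 w) := by
  classical
  set E := WithLp 2 (V × V)
  let e : E ≃L[ℝ] V × V := WithLp.prodContinuousLinearEquiv 2 ℝ V V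
  let π1 : E →L[ℝ] V := (ContinuousLinearMap.fst ℝ V V).comp e.toContinuousLinearMap
  let π2 : E →L[ℝ] V := (ContinuousLinearMap.snd ℝ V V).comp e.toContinuousLinearMap
  let B : E →L[ℝ] E →L[ℝ] ℝ :=
    a_par.bilinearComp π1 π1 + a_perp.bilinearComp π1 π1
      + (1 - ε) • a_par.bilinearComp π2 π1 - a_par.bilinearComp π1 π2
      + ε • a_par.bilinearComp π2 π2 + s.bilinearComp π2 π2
  have hB : ∀ x y : E, B x y =
      a_par (π1 x) (π1 y) + a_perp (π1 x) (π1 y) + (1 - ε) * a_par (π2 x) (π1 y)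
        - a_par (π1 x) (π2 y) + ε * a_par (π2 x) (π2 y) + s (π2 x) (π2 y) := by
    intro x y
    simp [B, ContinuousLinearMap.add_apply, ContinuousLinearMap.sub_apply,
      ContinuousLinearMap.smul_apply]
  -- Cauchy-Schwarz-type inequality for the semidefinite symmetric form a_par
  have hCS : ∀ u v : V, a_par u v ≤ (a_par u u + a_par v v) / 2 := by
    intro u v
    have h0 : (0:ℝ) ≤ a_par (u - v) (u - v) := hpar_pos _
    have hexp : a_par (u - v) (u - v)
        = a_par u u - a_par u v - a_par v u + a_par v v := by
      simp [map_sub, ContinuousLinearMap.sub_apply]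
      ring
    rw [hexp, hsymm v u] at h0
    linarith
  -- Coercivity of B
  have coercive : IsCoercive B := by
    refine ⟨min (α / 2) β, lt_min (by linarith) hβ, fun x => ?_⟩
    have hx : ‖x‖ ^ 2 = ‖π1 x‖ ^ 2 + ‖π2 x‖ ^ 2 := by
      exact WithLp.prod_norm_sq_eq_of_L2 x
    set φ := π1 x
    set q := π2 x
    have h1 : a_par φ q ≤ (a_par φ φ + a_par q q) / 2 := hCS φ q
    have h2 : B x x = a_par φ φ + a_perp φ φ - ε * a_par φ q + ε * a_par q q + s q q := by
      rw [hB x x, hsymm q φ]; ring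
    have h3 : α * ‖φ‖ ^ 2 ≤ a_par φ φ + a_perp φ φ := hcoer φ
    have h4 : β * ‖q‖ ^ 2 ≤ s q q := hscoer q
    have h5 : 0 ≤ a_par φ φ := hpar_pos φ
    have h6 : 0 ≤ a_perp φ φ := hperp_pos φ
    have h7 : 0 ≤ a_par q q := hpar_pos q
    have hmul : ε * a_par φ q ≤ ε * ((a_par φ φ + a_par q q) / 2) :=
      mul_le_mul_of_nonneg_left h1 hε0.le
    have key : min (α / 2) β * (‖φ‖ ^ 2 + ‖q‖ ^ 2) ≤ B x x := by
      have hm1 : min (α / 2) β * ‖φ‖ ^ 2 ≤ (α / 2) * ‖φ‖ ^ 2 :=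
        mul_le_mul_of_nonneg_right (min_le_left _ _) (sq_nonneg _)
      have hm2 : min (α / 2) β * ‖q‖ ^ 2 ≤ β * ‖q‖ ^ 2 :=
        mul_le_mul_of_nonneg_right (min_le_right _ _) (sq_nonneg _)
      nlinarith [sq_nonneg ‖φ‖, sq_nonneg ‖q‖]
    calc min (α / 2) β * ‖x‖ * ‖x‖ = min (α / 2) β * (‖φ‖ ^ 2 + ‖q‖ ^ 2) := by
          rw [← hx]; ring
      _ ≤ B x x := key
  -- The right-hand side functional on E
  let F : E →L[ℝ] ℝ := f.comp π1
  -- Solve B x y = F y for all y, via Lax-Milgram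
  let Φ := coercive.continuousLinearEquivOfBilin
  let z : E := (InnerProductSpace.toDual ℝ E).symm F
  have hsol : ∃! x : E, ∀ y : E, B x y = F y := by
    refine ⟨Φ.symm z, fun y => ?_, fun x' hx' => ?_⟩
    · have := coercive.continuousLinearEquivOfBilin_apply (Φ.symm z) y
      rw [show Φ (Φ.symm z) = z from Φ.apply_symm_apply z] at this
      rw [← this]
      exact (InnerProductSpace.toDual_symm_apply)
    · have hz : Φ x' = z := by
        apply ext_inner_right ℝ
        intro y
        rw [coercive.continuousLinearEquivOfBilin_apply, hx' y]
        exact (InnerProductSpace.toDual_symm_apply).symm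
      have : x' = Φ.symm z := by rw [← hz, Φ.symm_apply_apply]
      exact this
  -- Equivalence between the system and the equation B x · = F
  have hequiv : ∀ x : E,
      ((∀ v : V, (a_par (π1 x) v + a_perp (π1 x) v) + (1 - ε) * a_par (π2 x) v = f v) ∧
       (∀ w : V, a_par (π1 x) w = ε * a_par (π2 x) w + s (π2 x) w)) ↔
      (∀ y : E, B x y = F y) := by
    intro x
    constructor
    · rintro ⟨h1, h2⟩ y
      rw [hB x y]
      have e1 := h1 (π1 y)
      have e2 := h2 (π2 y)
      simp only [F, ContinuousLinearMap.comp_apply]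
      linarith
    · intro h
      constructor
      · intro v
        have := h (e.symm (v, 0))
        rw [hB] at this
        have hp1 : π1 (e.symm (v, 0)) = v := by simp [π1, e]
        have hp2 : π2 (e.symm (v, 0)) = 0 := by simp [π2, e]
        rw [hp1, hp2] at this
        simp only [F, ContinuousLinearMap.comp_apply, hp1, map_zero,
          ContinuousLinearMap.zero_apply] at this
        linarith
      · intro w
        have := h (e.symm (0, w))
        rw [hB] at this
        have hp1 : π1 (e.symm (0, w)) = 0 := by simp [π1, e]
        have hp2 : π2 (e.symm (0, w)) = w := by simp [π2, e]
        rw [hp1, hp2] at this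
        simp only [F, ContinuousLinearMap.comp_apply, hp1, map_zero,
          ContinuousLinearMap.zero_apply] at this
        linarith
  -- Transport along the equivalence e
  obtain ⟨x, hx, hxu⟩ := hsol
  have hπ : ∀ y : E, (π1 y, π2 y) = e y := fun y => rfl
  refine ⟨e x, ?_, ?_⟩
  · exact (hequiv x).mpr hx
  · intro p hp
    have hpx : ∀ y : E, B (e.symm p) y = F y := by
      apply (hequiv (e.symm p)).mp
      have h1 : π1 (e.symm p) = p.1 := by simp [π1, e]
      have h2 : π2 (e.symm p) = p.2 := by simp [π2, e]
      rw [h1, h2]; exact hp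
    have := hxu (e.symm p) hpx
    rw [← this, e.apply_symm_apply]
end

section
/- Let V be a real vector space, let a_par, a_perp, s be bilinear forms on V with a_par symmetric, set a := a_par + a_perp, let f : V → ℝ be linear, and let ε be a real number. Suppose (φ, q) ∈ V × V satisfies the stabilized AP system: a(φ, v) + (1−ε)·a_par(q, v) = f(v) for all v ∈ V, and a_par(φ, w) = ε·a_par(q, w) + s(q, w) for all w ∈ V. Then for any φ_h, q_h ∈ V, setting e := φ − φ_h and e_q := q − q_h, the following error identity holds: a(e, e) + (1−ε)·ε·a_par(e_q, e_q) + (1−ε)·s(e_q, e_q) = f(e) − a(φ_h, e) − (1−ε)·a_par(q_h, e) + (1−ε)·a_par(φ_h − ε·q_h, e_q) − (1−ε)·s(q_h, e_q). -/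
/-- The residual error equation at the core of Proposition 3.2: with
`a := a_∥ + a_⊥`, `e := φ − φ_h`, `e_q := q − q_h`, and `(φ,q)` solving the
stabilized AP system, one has
`a(e,e) + (1−ε)ε a_∥(e_q,e_q) + (1−ε)s(e_q,e_q)
  = f(e) − a(φ_h,e) − (1−ε)a_∥(q_h,e) + (1−ε)a_∥(φ_h − ε q_h, e_q) − (1−ε)s(q_h,e_q)`. -/
theorem stabilized_AP_residual_error_equation
    {V : Type*} [AddCommGroup V] [Module ℝ V]
    (a_par a_perp s : LinearMap.BilinForm ℝ V)
    (hsymm : ∀ u v : V, a_par u v = a_par v u)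
    (f : V →ₗ[ℝ] ℝ) (ε : ℝ) (φ q : V)
    (h1 : ∀ v : V, (a_par φ v + a_perp φ v) + (1 - ε) * a_par q v = f v)
    (h2 : ∀ w : V, a_par φ w = ε * a_par q w + s q w) :
    ∀ φ_h q_h : V,
      (a_par (φ - φ_h) (φ - φ_h) + a_perp (φ - φ_h) (φ - φ_h))
        + (1 - ε) * ε * a_par (q - q_h) (q - q_h)
        + (1 - ε) * s (q - q_h) (q - q_h)
      = f (φ - φ_h)
        - (a_par φ_h (φ - φ_h) + a_perp φ_h (φ - φ_h))
        - (1 - ε) * a_par q_h (φ - φ_h)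
        + (1 - ε) * a_par (φ_h - ε • q_h) (q - q_h)
        - (1 - ε) * s q_h (q - q_h) := by
  intro φ_h q_h
  have H1 := h1 (φ - φ_h)
  have H2 := h2 (q - q_h)
  have Hs := hsymm (φ - φ_h) (q - q_h)
  simp only [map_sub, LinearMap.sub_apply, map_smul, LinearMap.smul_apply,
    smul_eq_mul] at *
  linear_combination H1 - (1 - ε) * H2 + (1 - ε) * Hs
end
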